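/- Let F be a fractal subset of [0,1] satisfying the lacunarity condition with some constant λ ∈ (0,1]. Then the Hausdorff dimension of F is strictly positive: dim_H F > 0. -/

import Mathlib

open MeasureTheory Filter Set
open scoped Classical

noncomputable section

/-- The enlargement `B̄^a` of the interval `[s,t]` by the factor `1+a` about its centre. -/
def enlarge (a s t : ℝ) : Set ℝ :=
  Set.Icc (s - a * (t - s) / 2) (t + a * (t - s) / 2)

/-- The moment sum `Σ_{B ∈ B_r^*} μ(B̄^a)^q` over grid intervals of length `r`
whose interior meets the support of `μ` (i.e. with `μ(B) > 0`). -/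
def gridSum (μ : Measure ℝ) (a q R : ℝ) : ℝ :=
  ∑' m : ℤ, if 0 < μ (Set.Icc ((m : ℝ) * R) (((m : ℝ) + 1) * R))
    then (μ (enlarge a ((m : ℝ) * R) (((m : ℝ) + 1) * R))).toReal ^ q else 0

/-- The coarse multifractal moment function
`β_a(q) = inf{β : limsup_{r→0⁺} r^β Σ_{B ∈ B_r^*} μ(B̄^a)^q = 0}`.
(For the nonnegative quantity `r^β · Σ…`, vanishing of the `limsup` as `r → 0⁺`
is the same as convergence to `0`.) -/
def betaA (μ : Measure ℝ) (a q : ℝ) : ℝ :=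
  sInf {β : ℝ | Filter.Tendsto (fun R => R ^ β * gridSum μ a q R)
    (nhdsWithin 0 (Set.Ioi 0)) (nhds 0)}

/-- `F` is a "fractal subset" of `[0,1]`: compact, Lebesgue-null, containing `0` and `1`. -/
def IsFractalSubset (F : Set ℝ) : Prop :=
  IsCompact F ∧ F ⊆ Set.Icc 0 1 ∧ (0 : ℝ) ∈ F ∧ (1 : ℝ) ∈ F ∧ MeasureTheory.volume F = 0

/-- The complementary intervals `I_n = (l n, r n)` of `F` in `[0,1]`, enumerated with
nonincreasing lengths. -/
structure FractalComplement (F : Set ℝ) where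
  l : ℕ → ℝ
  r : ℕ → ℝ
  lt : ∀ n, l n < r n
  disj : Pairwise fun n m => Disjoint (Set.Ioo (l n) (r n)) (Set.Ioo (l m) (r m))
  union : (⋃ n, Set.Ioo (l n) (r n)) = Set.Icc (0 : ℝ) 1 \ F
  mono : ∀ n, r (n + 1) - l (n + 1) ≤ r n - l n

/-- The length `|I_n|` of the `n`-th complementary interval. -/
def FractalComplement.len {F : Set ℝ} (c : FractalComplement F) (n : ℕ) : ℝ := c.r n - c.l n

/-- The enlargement `Ī_n^a` of the closure of the complementary interval `I_n`. -/
def FractalComplement.I {F : Set ℝ} (c : FractalComplement F) (a : ℝ) (n : ℕ) : Set ℝ :=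
  enlarge a (c.l n) (c.r n)

/-- The lacunarity condition with constant `lam`: every interval `[x-r, x+r]` with `x ∈ F`
and `0 < r ≤ 1` contains a complementary interval of length at least `lam * r`. -/
def Lacunary {F : Set ℝ} (c : FractalComplement F) (lam : ℝ) : Prop :=
  ∀ x ∈ F, ∀ R : ℝ, 0 < R → R ≤ 1 → ∃ n,
    Set.Ioo (c.l n) (c.r n) ⊆ Set.Icc (x - R) (x + R) ∧ lam * R ≤ c.len n

/-- The topological support of `μ` is exactly `F`. -/
def HasSupport (μ : Measure ℝ) (F : Set ℝ) : Prop :=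
  μ Fᶜ = 0 ∧ ∀ x ∈ F, ∀ ε : ℝ, 0 < ε → 0 < μ (Set.Ioo (x - ε) (x + ε))

namespace Stmt7Aux

variable {F : Set ℝ} (c : FractalComplement F)

lemma gap_subset (n : ℕ) : Set.Ioo (c.l n) (c.r n) ⊆ Set.Icc (0:ℝ) 1 \ F := by
  rw [← c.union]; exact Set.subset_iUnion (fun m => Set.Ioo (c.l m) (c.r m)) n

lemma gap_l_nonneg (n : ℕ) : 0 ≤ c.l n := by
  by_contra h
  push_neg at h
  have hz : (c.l n + min 0 (c.r n)) / 2 ∈ Set.Ioo (c.l n) (c.r n) := by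
    constructor
    · have : c.l n < min 0 (c.r n) := lt_min h (c.lt n)
      linarith
    · have h1 : min 0 (c.r n) ≤ c.r n := min_le_right _ _
      have : c.l n < c.r n := c.lt n
      linarith
  have := (gap_subset c n hz).1.1
  have h1 : min 0 (c.r n) ≤ 0 := min_le_left _ _
  linarith

lemma gap_r_le_one (n : ℕ) : c.r n ≤ 1 := by
  by_contra h
  push_neg at h
  have hz : (max 1 (c.l n) + c.r n) / 2 ∈ Set.Ioo (c.l n) (c.r n) := by
    constructor
    · have : c.l n ≤ max 1 (c.l n) := le_max_right _ _
      have : c.l n < c.r n := c.lt n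
      have : max 1 (c.l n) < c.r n := max_lt h (c.lt n)
      linarith
    · have : max 1 (c.l n) < c.r n := max_lt h (c.lt n)
      linarith
  have := (gap_subset c n hz).1.2
  have h1 : (1:ℝ) ≤ max 1 (c.l n) := le_max_left _ _
  linarith

lemma gap_r_mem (n : ℕ) : c.r n ∈ F := by
  by_contra hb
  have hmem : c.r n ∈ Set.Icc (0:ℝ) 1 \ F := by
    refine ⟨⟨?_, gap_r_le_one c n⟩, hb⟩
    have := gap_l_nonneg c n
    have := c.lt n
    linarith
  rw [← c.union] at hmem
  obtain ⟨m, hm⟩ := Set.mem_iUnion.1 hmem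
  have hmn : m ≠ n := by
    intro h; subst h; exact lt_irrefl _ hm.2
  have hdisj := c.disj hmn
  set z := (max (c.l n) (c.l m) + c.r n) / 2 with hz
  have hmaxlt : max (c.l n) (c.l m) < c.r n := max_lt (c.lt n) hm.1
  have hz1 : z ∈ Set.Ioo (c.l m) (c.r m) := by
    constructor
    · have : c.l m ≤ max (c.l n) (c.l m) := le_max_right _ _
      simp only [hz]; linarith
    · have : z < c.r n := by simp only [hz]; linarith
      exact this.trans hm.2
  have hz2 : z ∈ Set.Ioo (c.l n) (c.r n) := by
    constructor
    · have : c.l n ≤ max (c.l n) (c.l m) := le_max_left _ _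
      simp only [hz]; linarith
    · simp only [hz]; linarith
  exact (Set.disjoint_left.1 hdisj hz1 hz2).elim

lemma gap_l_mem (n : ℕ) : c.l n ∈ F := by
  by_contra hb
  have hmem : c.l n ∈ Set.Icc (0:ℝ) 1 \ F := by
    refine ⟨⟨gap_l_nonneg c n, ?_⟩, hb⟩
    have := gap_r_le_one c n
    have := c.lt n
    linarith
  rw [← c.union] at hmem
  obtain ⟨m, hm⟩ := Set.mem_iUnion.1 hmem
  have hmn : m ≠ n := by
    intro h; subst h; exact lt_irrefl _ hm.1
  have hdisj := c.disj hmn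
  set z := (c.l n + min (c.r n) (c.r m)) / 2 with hz
  have hminlt : c.l n < min (c.r n) (c.r m) := lt_min (c.lt n) hm.2
  have hz1 : z ∈ Set.Ioo (c.l m) (c.r m) := by
    constructor
    · have : z > c.l n := by simp only [hz]; linarith
      exact hm.1.trans this
    · have : min (c.r n) (c.r m) ≤ c.r m := min_le_right _ _
      simp only [hz]; linarith
  have hz2 : z ∈ Set.Ioo (c.l n) (c.r n) := by
    constructor
    · simp only [hz]; linarith
    · have : min (c.r n) (c.r m) ≤ c.r n := min_le_left _ _
      simp only [hz]; linarith
  exact (Set.disjoint_left.1 hdisj hz1 hz2).elim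

/-- Uniform perfectness: for `x ∈ F` and `0 < r ≤ 1` there is `y ∈ F` with
`lam*r ≤ |y - x| ≤ r`. -/
lemma unif_perfect {lam : ℝ} (hlam0 : 0 < lam) (hlac : Lacunary c lam)
    {p : ℝ} (hp : p ∈ F) {r : ℝ} (hr0 : 0 < r) (hr1 : r ≤ 1) :
    ∃ y, y ∈ F ∧ lam * r ≤ |y - p| ∧ |y - p| ≤ r := by
  obtain ⟨n, hIoo, hlen⟩ := hlac p hp r hr0 hr1
  have hltn := c.lt n
  have hlenpos : 0 < c.len n := by
    have := mul_pos hlam0 hr0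
    exact lt_of_lt_of_le this hlen
  have hlF := gap_l_mem c n
  have hrF := gap_r_mem c n
  -- p is not in the open gap
  have hpnot : p ∉ Set.Ioo (c.l n) (c.r n) := fun h => (gap_subset c n h).2 hp
  -- bounds : p - r ≤ c.l n  and  c.r n ≤ p + r
  have hlb : p - r ≤ c.l n := by
    by_contra h
    push_neg at h
    have h1 : c.l n < min (c.r n) (p - r) := lt_min hltn h
    have hz : (c.l n + min (c.r n) (p - r)) / 2 ∈ Set.Ioo (c.l n) (c.r n) := by
      constructor
      · linarith
      · have : min (c.r n) (p - r) ≤ c.r n := min_le_left _ _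
        linarith
    have := (hIoo hz).1
    have h2 : min (c.r n) (p - r) ≤ p - r := min_le_right _ _
    linarith
  have hub : c.r n ≤ p + r := by
    by_contra h
    push_neg at h
    have h1 : max (c.l n) (p + r) < c.r n := max_lt hltn h
    have hz : (max (c.l n) (p + r) + c.r n) / 2 ∈ Set.Ioo (c.l n) (c.r n) := by
      constructor
      · have : c.l n ≤ max (c.l n) (p + r) := le_max_left _ _
        linarith
      · linarith
    have := (hIoo hz).2
    have : p + r ≤ max (c.l n) (p + r) := le_max_right _ _
    linarith
  rw [Set.mem_Ioo, not_and_or, not_lt, not_lt] at hpnot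
  rcases hpnot with hple | hpge
  · -- p ≤ l n : take y = r n
    refine ⟨c.r n, hrF, ?_, ?_⟩
    · rw [abs_of_nonneg (by linarith)]
      have : c.len n = c.r n - c.l n := rfl
      linarith [hlen, this ▸ hlen]
    · rw [abs_of_nonneg (by linarith)]
      linarith
  · -- r n ≤ p : take y = l n
    refine ⟨c.l n, hlF, ?_, ?_⟩
    · rw [abs_of_nonpos (by linarith)]
      have : c.len n = c.r n - c.l n := rfl
      linarith [hlen]
    · rw [abs_of_nonpos (by linarith)]
      linarith

end Stmt7Aux

namespace Stmt7Aux
set_option linter.unusedSectionVars false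

/-- Choice of a point of `F` at distance between `lam*(lam/8)^n/4` and `(lam/8)^n/4` from `p`. -/
noncomputable def pick (F : Set ℝ) (lam p : ℝ) (n : ℕ) : ℝ :=
  if h : ∃ y, y ∈ F ∧ lam * ((lam/8)^n/4) ≤ |y - p| ∧ |y - p| ≤ (lam/8)^n/4 then h.choose else p

/-- The branching trajectory: at step `n` either stay or jump to `pick`. -/
noncomputable def traj (F : Set ℝ) (lam : ℝ) (ω : ℕ → Bool) : ℕ → ℝ
  | 0 => 0
  | n+1 => if ω n then pick F lam (traj F lam ω n) n else traj F lam ω n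

variable {F : Set ℝ} {lam : ℝ} (c : FractalComplement F)

section

variable (hF : IsFractalSubset F) (hlam0 : 0 < lam) (hlam1 : lam ≤ 1)
  (hlac : Lacunary c lam)

include c hlam0 hlam1 hlac

lemma pick_exists {p : ℝ} (hp : p ∈ F) (n : ℕ) :
    ∃ y, y ∈ F ∧ lam * ((lam/8)^n/4) ≤ |y - p| ∧ |y - p| ≤ (lam/8)^n/4 := by
  have hgp : (0:ℝ) < lam/8 := by linarith
  have hg0 : (0:ℝ) < (lam/8)^n := pow_pos hgp n
  have hg1 : (lam/8)^n ≤ 1 := pow_le_one₀ hgp.le (by linarith)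
  obtain ⟨y, hy, h1, h2⟩ := unif_perfect c hlam0 hlac hp (by linarith : (0:ℝ) < (lam/8)^n/4)
    (by linarith)
  exact ⟨y, hy, h1, h2⟩

lemma pick_spec {p : ℝ} (hp : p ∈ F) (n : ℕ) :
    pick F lam p n ∈ F ∧ lam * ((lam/8)^n/4) ≤ |pick F lam p n - p| ∧
      |pick F lam p n - p| ≤ (lam/8)^n/4 := by
  rw [pick, dif_pos (pick_exists c hlam0 hlam1 hlac hp n)]
  exact (pick_exists c hlam0 hlam1 hlac hp n).choose_spec

include c hF hlac

lemma traj_mem (ω : ℕ → Bool) : ∀ n, traj F lam ω n ∈ F := by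
  intro n
  induction n with
  | zero => exact hF.2.2.1
  | succ n ih =>
      rw [traj]
      by_cases h : ω n
      · rw [if_pos h]; exact (pick_spec c hlam0 hlam1 hlac ih n).1
      · rw [if_neg h]; exact ih

lemma traj_step (ω : ℕ → Bool) (n : ℕ) :
    dist (traj F lam ω n) (traj F lam ω (n+1)) ≤ (1/4) * (lam/8)^n := by
  rw [show traj F lam ω (n+1) = if ω n then pick F lam (traj F lam ω n) n
    else traj F lam ω n from rfl]
  by_cases h : ω n
  · rw [if_pos h, dist_comm, Real.dist_eq]
    have := (pick_spec c hlam0 hlam1 hlac (traj_mem c hF hlam0 hlam1 hlac ω n) n).2.2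
    linarith
  · rw [if_neg h, dist_self]
    positivity

lemma traj_cauchy (ω : ℕ → Bool) : CauchySeq (traj F lam ω) :=
  cauchySeq_of_le_geometric (lam/8) (1/4) (by linarith)
    (traj_step c hF hlam0 hlam1 hlac ω)

end

/-- The limit point of the trajectory. -/
noncomputable def glim (F : Set ℝ) (lam : ℝ) (ω : ℕ → Bool) : ℝ :=
  if h : ∃ L, Tendsto (traj F lam ω) atTop (nhds L) then h.choose else 0

section

variable (hF : IsFractalSubset F) (hlam0 : 0 < lam) (hlam1 : lam ≤ 1)
  (hlac : Lacunary c lam)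

include c hF hlam0 hlam1 hlac

lemma glim_tendsto (ω : ℕ → Bool) :
    Tendsto (traj F lam ω) atTop (nhds (glim F lam ω)) := by
  have h : ∃ L, Tendsto (traj F lam ω) atTop (nhds L) :=
    cauchySeq_tendsto_of_complete (traj_cauchy c hF hlam0 hlam1 hlac ω)
  rw [glim, dif_pos h]
  exact h.choose_spec

lemma glim_mem (ω : ℕ → Bool) : glim F lam ω ∈ F :=
  hF.1.isClosed.mem_of_tendsto (glim_tendsto c hF hlam0 hlam1 hlac ω)
    (Eventually.of_forall (traj_mem c hF hlam0 hlam1 hlac ω))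

lemma glim_dist (ω : ℕ → Bool) (n : ℕ) :
    dist (traj F lam ω n) (glim F lam ω) ≤ (2/7) * (lam/8)^n := by
  have h := dist_le_of_le_geometric_of_tendsto (lam/8) (1/4) (by linarith)
    (traj_step c hF hlam0 hlam1 hlac ω) (glim_tendsto c hF hlam0 hlam1 hlac ω) n
  have hg : (7:ℝ)/8 ≤ 1 - lam/8 := by linarith
  have hpow : (0:ℝ) < (lam/8)^n := pow_pos (by linarith) n
  calc dist (traj F lam ω n) (glim F lam ω) ≤ 1/4 * (lam/8)^n / (1 - lam/8) := h
    _ ≤ 1/4 * (lam/8)^n / (7/8) := by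
        apply div_le_div_of_nonneg_left (by positivity) (by norm_num) hg
    _ = (2/7) * (lam/8)^n := by ring

lemma traj_agree (ω ω' : ℕ → Bool) (n : ℕ) (h : ∀ k < n, ω k = ω' k) :
    traj F lam ω n = traj F lam ω' n := by
  induction n with
  | zero => rfl
  | succ n ih =>
      have hn : traj F lam ω n = traj F lam ω' n :=
        ih (fun k hk => h k (Nat.lt_succ_of_lt hk))
      rw [traj, traj, hn, h n (Nat.lt_succ_self n)]

lemma glim_sep (ω ω' : ℕ → Bool) (n : ℕ) (h : ∀ k < n, ω k = ω' k)
    (hne : ω n ≠ ω' n) :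
    lam / 6 * (lam/8)^n ≤ |glim F lam ω - glim F lam ω'| := by
  have hagree : traj F lam ω n = traj F lam ω' n := traj_agree c hF hlam0 hlam1 hlac ω ω' n h
  set p := traj F lam ω n with hp
  have hpF : p ∈ F := traj_mem c hF hlam0 hlam1 hlac ω n
  have hps := pick_spec c hlam0 hlam1 hlac hpF n
  -- distance at level n+1
  have hstep : lam * ((lam/8)^n/4) ≤ |traj F lam ω (n+1) - traj F lam ω' (n+1)| := by
    rw [show traj F lam ω (n+1) = if ω n then pick F lam (traj F lam ω n) n
        else traj F lam ω n from rfl,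
      show traj F lam ω' (n+1) = if ω' n then pick F lam (traj F lam ω' n) n
        else traj F lam ω' n from rfl, ← hagree, ← hp]
    have hcases : (ω n = true ∧ ω' n = false) ∨ (ω n = false ∧ ω' n = true) := by
      cases hω : ω n <;> cases hω' : ω' n <;> simp_all
    rcases hcases with ⟨h1, h2⟩ | ⟨h1, h2⟩ <;> rw [h1, h2] <;>
      simpa [abs_sub_comm] using hps.2.1
  have hd1 := glim_dist c hF hlam0 hlam1 hlac ω (n+1)
  have hd2 := glim_dist c hF hlam0 hlam1 hlac ω' (n+1)
  rw [Real.dist_eq] at hd1 hd2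
  have hpow : (0:ℝ) < (lam/8)^n := pow_pos (by linarith) n
  have hpsucc : ((lam/8):ℝ)^(n+1) = (lam/8) * (lam/8)^n := pow_succ' _ _
  have habs1 : |glim F lam ω - glim F lam ω'| ≥
      |traj F lam ω (n+1) - traj F lam ω' (n+1)|
        - |traj F lam ω (n+1) - glim F lam ω| - |traj F lam ω' (n+1) - glim F lam ω'| := by
    have := abs_sub_abs_le_abs_sub (traj F lam ω (n+1) - traj F lam ω' (n+1))
      ((traj F lam ω (n+1) - glim F lam ω) - (traj F lam ω' (n+1) - glim F lam ω'))
    have h2 : |(traj F lam ω (n+1) - glim F lam ω) - (traj F lam ω' (n+1) - glim F lam ω')|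
        ≤ |traj F lam ω (n+1) - glim F lam ω| + |traj F lam ω' (n+1) - glim F lam ω'| :=
      abs_sub _ _
    have h3 : traj F lam ω (n+1) - traj F lam ω' (n+1) -
        ((traj F lam ω (n+1) - glim F lam ω) - (traj F lam ω' (n+1) - glim F lam ω')) =
        glim F lam ω - glim F lam ω' := by ring
    rw [h3] at this
    linarith
  nlinarith [hstep, hd1, hd2, habs1, hpow, hlam0, hlam1]

lemma glim_inj : Function.Injective (glim F lam) := by
  intro ω ω' hgl
  by_contra hne
  have hex : ∃ n, ω n ≠ ω' n := by
    by_contra h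
    push_neg at h
    exact hne (funext h)
  set n := Nat.find hex with hn
  have h1 : ∀ k < n, ω k = ω' k := fun k hk => by
    have := Nat.find_min hex hk
    simpa using this
  have := glim_sep c hF hlam0 hlam1 hlac ω ω' n h1 (Nat.find_spec hex)
  rw [hgl, sub_self, abs_zero] at this
  have hpow : (0:ℝ) < (lam/8)^n := pow_pos (by linarith) n
  nlinarith

end

end Stmt7Aux

namespace Stmt7Aux
set_option linter.unreachableTactic false
set_option linter.unusedTactic false

/-- Binary-expansion sum of a Boolean sequence. -/
noncomputable def bsum (ω : ℕ → Bool) : ℝ :=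
  ∑' n : ℕ, (if ω n then ((1:ℝ)/2)^(n+1) else 0)

lemma bsum_term_abs (ω ω' : ℕ → Bool) (k : ℕ) :
    |(if ω k then ((1:ℝ)/2)^(k+1) else 0) - (if ω' k then ((1:ℝ)/2)^(k+1) else 0)|
      ≤ ((1:ℝ)/2)^(k+1) := by
  have h : (0:ℝ) < ((1:ℝ)/2)^(k+1) := by positivity
  by_cases h1 : ω k <;> by_cases h2 : ω' k <;>
    simp [h1, h2, abs_of_nonneg, abs_of_nonpos, h.le] <;> rw [abs_of_nonpos (by linarith)] <;>
    linarith

lemma summable_half : Summable (fun k : ℕ => ((1:ℝ)/2)^(k+1)) := by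
  have := summable_geometric_of_lt_one (by norm_num : (0:ℝ) ≤ 1/2) (by norm_num)
  exact this.comp_injective (add_left_injective 1)

lemma tsum_half : (∑' k : ℕ, ((1:ℝ)/2)^(k+1)) = 1 := by
  have h : (fun k : ℕ => ((1:ℝ)/2)^(k+1)) = fun k : ℕ => (1/2) * (1/2)^k := by
    funext k; rw [pow_succ]; ring
  rw [h, tsum_mul_left, tsum_geometric_of_lt_one (by norm_num) (by norm_num)]
  norm_num

lemma bsum_summable (ω : ℕ → Bool) :
    Summable (fun n : ℕ => (if ω n then ((1:ℝ)/2)^(n+1) else 0)) := by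
  apply Summable.of_nonneg_of_le (fun n => by positivity)
    (fun n => ?_) summable_half
  by_cases h : ω n <;> simp [h] <;> positivity

lemma bsum_nonneg (ω : ℕ → Bool) : 0 ≤ bsum ω :=
  tsum_nonneg (fun n => by by_cases h : ω n <;> simp [h] <;> positivity)

lemma bsum_le_one (ω : ℕ → Bool) : bsum ω ≤ 1 := by
  rw [← tsum_half]
  apply Summable.tsum_le_tsum _ (bsum_summable ω) summable_half
  intro n
  by_cases h : ω n <;> simp [h] <;> positivity

set_option maxHeartbeats 1000000 in
lemma bsum_dist (ω ω' : ℕ → Bool) (n : ℕ) (h : ∀ k < n, ω k = ω' k) :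
    |bsum ω - bsum ω'| ≤ ((1:ℝ)/2)^n := by
  set d : ℕ → ℝ := fun k =>
    (if ω k then ((1:ℝ)/2)^(k+1) else 0) - (if ω' k then ((1:ℝ)/2)^(k+1) else 0) with hd
  have hds : Summable d := (bsum_summable ω).sub (bsum_summable ω')
  have habs : Summable (fun k => |d k|) := by
    apply Summable.of_nonneg_of_le (fun k => abs_nonneg _) (fun k => bsum_term_abs ω ω' k)
      summable_half
  have h1 : bsum ω - bsum ω' = ∑' k, d k := (Summable.tsum_sub (bsum_summable ω)
    (bsum_summable ω')).symm
  rw [h1]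
  have h2 : |∑' k, d k| ≤ ∑' k, |d k| := by
    have := norm_tsum_le_tsum_norm (f := d) (by simpa [Real.norm_eq_abs] using habs)
    simpa [Real.norm_eq_abs] using this
  refine h2.trans ?_
  have h3 : (∑' k, |d k|) = ∑ k ∈ Finset.range n, |d k| + ∑' k, |d (k + n)| :=
    (Summable.sum_add_tsum_nat_add n habs).symm
  have h4 : ∑ k ∈ Finset.range n, |d k| = 0 := by
    apply Finset.sum_eq_zero
    intro k hk
    rw [hd]
    simp only [h k (Finset.mem_range.1 hk), sub_self, abs_zero]
  have h5 : (∑' k : ℕ, |d (k + n)|) ≤ ∑' k : ℕ, ((1:ℝ)/2)^(k+n+1) := by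
    apply Summable.tsum_le_tsum _ (habs.comp_injective (add_left_injective n)) ?_
    · intro k; exact bsum_term_abs ω ω' (k+n)
    · have : (fun k : ℕ => ((1:ℝ)/2)^(k+n+1)) = fun k => ((1:ℝ)/2)^n * ((1:ℝ)/2)^(k+1) := by
        funext k; rw [← pow_add]; ring_nf
      rw [this]
      exact summable_half.mul_left _
  have h6 : (∑' k : ℕ, ((1:ℝ)/2)^(k+n+1)) = ((1:ℝ)/2)^n := by
    have : (fun k : ℕ => ((1:ℝ)/2)^(k+n+1)) = fun k => ((1:ℝ)/2)^n * ((1:ℝ)/2)^(k+1) := by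
      funext k; rw [← pow_add]; ring_nf
    rw [this, tsum_mul_left, tsum_half, mul_one]
  rw [h3, h4, zero_add]
  rw [h6] at h5
  exact h5

/-- Remainder sequence for the greedy binary expansion of `t`. -/
noncomputable def rem (t : ℝ) : ℕ → ℝ
  | 0 => t
  | n+1 => if ((1:ℝ)/2)^(n+1) ≤ rem t n then rem t n - ((1:ℝ)/2)^(n+1) else rem t n

/-- Greedy binary digits of `t`. -/
noncomputable def dig (t : ℝ) (n : ℕ) : Bool := decide (((1:ℝ)/2)^(n+1) ≤ rem t n)

lemma rem_bounds {t : ℝ} (h0 : 0 ≤ t) (h1 : t ≤ 1) (n : ℕ) :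
    0 ≤ rem t n ∧ rem t n ≤ ((1:ℝ)/2)^n := by
  induction n with
  | zero => simpa [rem] using ⟨h0, h1⟩
  | succ n ih =>
      rw [rem]
      by_cases h : ((1:ℝ)/2)^(n+1) ≤ rem t n
      · rw [if_pos h]
        constructor
        · linarith
        · have : ((1:ℝ)/2)^(n+1) = (1/2) * ((1:ℝ)/2)^n := by rw [pow_succ]; ring
          have h2 := ih.2
          rw [this] at *
          linarith
      · rw [if_neg h]
        push_neg at h
        exact ⟨ih.1, h.le⟩

lemma rem_partial (t : ℝ) (n : ℕ) :
    ∑ k ∈ Finset.range n, (if dig t k then ((1:ℝ)/2)^(k+1) else 0) = t - rem t n := by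
  induction n with
  | zero => simp [rem]
  | succ n ih =>
      rw [Finset.sum_range_succ, ih]
      have hrem : rem t (n+1) = if ((1:ℝ)/2)^(n+1) ≤ rem t n
          then rem t n - ((1:ℝ)/2)^(n+1) else rem t n := rfl
      have hdig : (if dig t n then ((1:ℝ)/2)^(n+1) else 0)
          = if ((1:ℝ)/2)^(n+1) ≤ rem t n then ((1:ℝ)/2)^(n+1) else 0 := by
        rw [dig]
        by_cases h : ((1:ℝ)/2)^(n+1) ≤ rem t n <;> simp [h]
      rw [hrem, hdig]
      by_cases h : ((1:ℝ)/2)^(n+1) ≤ rem t n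
      · rw [if_pos h, if_pos h]; ring
      · rw [if_neg h, if_neg h]; ring

lemma bsum_dig {t : ℝ} (h0 : 0 ≤ t) (h1 : t ≤ 1) : bsum (dig t) = t := by
  have hsum : Summable (fun n : ℕ => (if dig t n then ((1:ℝ)/2)^(n+1) else 0)) :=
    bsum_summable (dig t)
  have hten : Tendsto (fun n => ∑ k ∈ Finset.range n,
      (if dig t k then ((1:ℝ)/2)^(k+1) else 0)) atTop (nhds t) := by
    simp only [rem_partial t]
    have hr : Tendsto (fun n => rem t n) atTop (nhds 0) := by
      apply squeeze_zero (fun n => (rem_bounds h0 h1 n).1) (fun n => (rem_bounds h0 h1 n).2)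
      exact tendsto_pow_atTop_nhds_zero_of_lt_one (by norm_num) (by norm_num)
    have := Tendsto.const_sub t hr
    simpa using this
  have := (hsum.hasSum_iff_tendsto_nat).2 hten
  exact this.tsum_eq

end Stmt7Aux

namespace Stmt7Aux
open scoped NNReal ENNReal

/-- The coding map sending a point of the Cantor scheme to the binary value of its address. -/
noncomputable def fmap (F : Set ℝ) (lam : ℝ) (z : ℝ) : ℝ :=
  if h : ∃ ω, glim F lam ω = z then bsum h.choose else 0

variable {F : Set ℝ} {lam : ℝ} (c : FractalComplement F)
  (hF : IsFractalSubset F) (hlam0 : 0 < lam) (hlam1 : lam ≤ 1) (hlac : Lacunary c lam)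

include c hF hlam0 hlam1 hlac

lemma fmap_glim (ω : ℕ → Bool) : fmap F lam (glim F lam ω) = bsum ω := by
  have h : ∃ ω', glim F lam ω' = glim F lam ω := ⟨ω, rfl⟩
  rw [fmap, dif_pos h]
  congr 1
  exact glim_inj c hF hlam0 hlam1 hlac h.choose_spec

lemma fmap_holder {s : ℝ} (hs0 : 0 < s) (hγs : ((lam/8):ℝ) ^ s = 1/2) :
    HolderOnWith (Real.toNNReal ((6/lam) ^ s)) (Real.toNNReal s) (fmap F lam)
      (Set.range (glim F lam)) := by
  have hγpos : (0:ℝ) < lam/8 := by linarith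
  have hkey : ∀ n : ℕ, (((lam/8):ℝ)^n) ^ s = ((1:ℝ)/2)^n := by
    intro n
    rw [← Real.rpow_natCast (lam/8) n, ← Real.rpow_mul hγpos.le, mul_comm,
      Real.rpow_mul hγpos.le, hγs, Real.rpow_natCast]
  rintro z ⟨ω, rfl⟩ z' ⟨ω', rfl⟩
  by_cases hωω : ω = ω'
  · subst hωω
    simp only [edist_self]
    exact zero_le
  · have hex : ∃ n, ω n ≠ ω' n := by
      by_contra h; push_neg at h; exact hωω (funext h)
    set n := Nat.find hex with hn
    have hagree : ∀ k < n, ω k = ω' k := fun k hk => by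
      have := Nat.find_min hex hk; simpa using this
    have hb : |bsum ω - bsum ω'| ≤ ((1:ℝ)/2)^n := bsum_dist ω ω' n hagree
    have hsep : lam / 6 * (lam/8)^n ≤ |glim F lam ω - glim F lam ω'| :=
      glim_sep c hF hlam0 hlam1 hlac ω ω' n hagree (Nat.find_spec hex)
    have hpow : (0:ℝ) < (lam/8)^n := pow_pos hγpos n
    have hzpos : (0:ℝ) < |glim F lam ω - glim F lam ω'| := by nlinarith
    -- real-valued Hölder inequality
    have hreal : |bsum ω - bsum ω'| ≤ (6/lam)^s * |glim F lam ω - glim F lam ω'|^s := by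
      have h1 : ((lam/6) * (lam/8)^n)^s ≤ |glim F lam ω - glim F lam ω'|^s := by
        apply Real.rpow_le_rpow (by positivity) _ hs0.le
        calc lam/6 * (lam/8)^n = lam / 6 * (lam/8)^n := rfl
          _ ≤ _ := hsep
      have h2 : (((lam/6) : ℝ) * (lam/8)^n)^s = (lam/6)^s * ((1:ℝ)/2)^n := by
        rw [Real.mul_rpow (by positivity) (by positivity), hkey]
      have h3 : ((6:ℝ)/lam)^s * ((lam/6) : ℝ)^s = 1 := by
        rw [← Real.mul_rpow (by positivity) (by positivity)]
        have : (6:ℝ)/lam * (lam/6) = 1 := by field_simp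
        rw [this, Real.one_rpow]
      have h4 : (0:ℝ) ≤ ((6:ℝ)/lam)^s := by positivity
      calc |bsum ω - bsum ω'| ≤ ((1:ℝ)/2)^n := hb
        _ = ((6:ℝ)/lam)^s * ((lam/6)^s * ((1:ℝ)/2)^n) := by
            rw [← mul_assoc, h3, one_mul]
        _ = ((6:ℝ)/lam)^s * (((lam/6) : ℝ) * (lam/8)^n)^s := by rw [h2]
        _ ≤ ((6:ℝ)/lam)^s * |glim F lam ω - glim F lam ω'|^s := by
            apply mul_le_mul_of_nonneg_left h1 h4
    -- pass to edist
    rw [fmap_glim c hF hlam0 hlam1 hlac, fmap_glim c hF hlam0 hlam1 hlac]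
    rw [edist_dist, edist_dist, Real.dist_eq, Real.dist_eq]
    have hcoe : ((Real.toNNReal s : ℝ≥0) : ℝ) = s := Real.coe_toNNReal s hs0.le
    calc ENNReal.ofReal |bsum ω - bsum ω'|
        ≤ ENNReal.ofReal ((6/lam)^s * |glim F lam ω - glim F lam ω'|^s) :=
          ENNReal.ofReal_le_ofReal hreal
      _ = ENNReal.ofReal ((6/lam)^s) * ENNReal.ofReal (|glim F lam ω - glim F lam ω'|^s) :=
          ENNReal.ofReal_mul (by positivity)
      _ = ENNReal.ofReal ((6/lam)^s) *
            ENNReal.ofReal |glim F lam ω - glim F lam ω'| ^ ((Real.toNNReal s : ℝ≥0) : ℝ) := by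
          rw [hcoe, ENNReal.ofReal_rpow_of_nonneg (abs_nonneg _) hs0.le]
      _ = _ := by rw [ENNReal.ofReal]

end Stmt7Aux

/-- a fractal subset of `[0,1]` satisfying the lacunarity condition has
strictly positive Hausdorff dimension. -/
theorem stmt_7 (F : Set ℝ) (hF : IsFractalSubset F) (c : FractalComplement F)
    (lam : ℝ) (hlam0 : 0 < lam) (hlam1 : lam ≤ 1) (hlac : Lacunary c lam) :
    0 < dimH F := by
  classical
  set s : ℝ := Real.log 2 / Real.log (8/lam) with hs
  have hlt : (1:ℝ) < 8/lam := by
    rw [lt_div_iff₀ hlam0]; linarith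
  have hlog : 0 < Real.log (8/lam) := Real.log_pos hlt
  have hs0 : 0 < s := div_pos (Real.log_pos (by norm_num)) hlog
  have hγpos : (0:ℝ) < lam/8 := by linarith
  have hγs : ((lam/8):ℝ) ^ s = 1/2 := by
    rw [show (lam/8 : ℝ) = (8/lam)⁻¹ by rw [inv_div], Real.rpow_def_of_pos (by positivity),
      Real.log_inv]
    have : -Real.log (8/lam) * s = -Real.log 2 := by
      rw [hs]; field_simp
    rw [this, Real.exp_neg, Real.exp_log (by norm_num : (0:ℝ) < 2)]
    norm_num
  have hhol := Stmt7Aux.fmap_holder c hF hlam0 hlam1 hlac hs0 hγs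
  have hsnn0 : 0 < Real.toNNReal s := Real.toNNReal_pos.2 hs0
  have hKF : Set.range (Stmt7Aux.glim F lam) ⊆ F := by
    rintro z ⟨ω, rfl⟩
    exact Stmt7Aux.glim_mem c hF hlam0 hlam1 hlac ω
  have himg : Set.Icc (0:ℝ) 1 ⊆ Stmt7Aux.fmap F lam '' Set.range (Stmt7Aux.glim F lam) := by
    intro t ht
    refine ⟨Stmt7Aux.glim F lam (Stmt7Aux.dig t), ⟨Stmt7Aux.dig t, rfl⟩, ?_⟩
    rw [Stmt7Aux.fmap_glim c hF hlam0 hlam1 hlac]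
    exact Stmt7Aux.bsum_dig ht.1 ht.2
  have hIcc : dimH (Set.Icc (0:ℝ) 1) = 1 := by
    rw [Real.dimH_of_nonempty_interior (s := Set.Icc (0:ℝ) 1)]
    · simp
    · rw [interior_Icc]
      exact ⟨1/2, by norm_num⟩
  have h1 : (1:ENNReal) ≤ dimH (Set.range (Stmt7Aux.glim F lam)) / (Real.toNNReal s : ENNReal) := by
    calc (1:ENNReal) = dimH (Set.Icc (0:ℝ) 1) := hIcc.symm
      _ ≤ dimH (Stmt7Aux.fmap F lam '' Set.range (Stmt7Aux.glim F lam)) := dimH_mono himg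
      _ ≤ _ := hhol.dimH_image_le hsnn0
  have h2 : ((Real.toNNReal s : ENNReal)) ≤ dimH (Set.range (Stmt7Aux.glim F lam)) := by
    have := (ENNReal.le_div_iff_mul_le
      (Or.inl (by exact_mod_cast hsnn0.ne'))
      (Or.inl ENNReal.coe_ne_top)).1 h1
    simpa using this
  calc (0:ENNReal) < (Real.toNNReal s : ENNReal) := by exact_mod_cast hsnn0
    _ ≤ dimH (Set.range (Stmt7Aux.glim F lam)) := h2
    _ ≤ dimH F := dimH_mono hKF
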